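/- In the embedding-then-LayerNorm setting Y = LayerNorm(XW_E; γ) with X ∈ ℝ^{n×d} one-hot rows, W_E ∈ ℝ^{d×D}, and all rows of Z = XW_E having positive variance, the Jacobian norm satisfies ‖∂Y/∂W_E‖_F ≤ n√D · ‖γ‖_F / min_{k∈[d]} ‖w̃_k‖₂, where w̃_k denotes the k-th row of the row-wise centered matrix W̃_E = W_E - E_r[W_E]. -/

import Mathlib

attribute [local instance] Matrix.normedAddCommGroup Matrix.normedSpace

noncomputable def rmean {n D : ℕ} (X : Matrix (Fin n) (Fin D) ℝ) (i : Fin n) : ℝ :=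
  (∑ j, X i j) / D

noncomputable def rvar {n D : ℕ} (X : Matrix (Fin n) (Fin D) ℝ) (i : Fin n) : ℝ :=
  (∑ j, (X i j - rmean X i)^2) / D

/-- LayerNorm without bias. -/
noncomputable def layerNorm {n D : ℕ} (X : Matrix (Fin n) (Fin D) ℝ)
    (γ : Fin D → ℝ) : Matrix (Fin n) (Fin D) ℝ :=
  Matrix.of fun i j => (X i j - rmean X i) / Real.sqrt (rvar X i) * γ j

/-- Row-wise centering. -/
noncomputable def rowCenter {m D : ℕ} (A : Matrix (Fin m) (Fin D) ℝ) :
    Matrix (Fin m) (Fin D) ℝ :=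
  Matrix.of fun i j => A i j - (∑ k, A i k) / D

section aux

private lemma aux_sum_sq_bound {D : ℕ} (hD : 0 < D) (c : Fin D → ℝ) (j : Fin D) (γj v : ℝ)
    (hv : 0 < v) (hsum : ∑ t, c t = 0) (hsq : ∑ t, (c t)^2 = D * v) :
    ∑ l, (γj * (((if j = l then (1:ℝ) else 0) - 1/(D:ℝ)) / Real.sqrt v -
        c j * c l / ((D:ℝ) * v * Real.sqrt v)))^2 ≤ γj^2 / v := by
  have hD' : (0:ℝ) < D := by exact_mod_cast hD
  obtain ⟨s, hs0, rfl⟩ : ∃ s : ℝ, 0 < s ∧ v = s^2 :=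
    ⟨Real.sqrt v, Real.sqrt_pos.2 hv, (Real.sq_sqrt hv.le).symm⟩
  rw [Real.sqrt_sq hs0.le]
  have key : ∀ l, (γj * (((if j = l then (1:ℝ) else 0) - 1/(D:ℝ)) / s -
        c j * c l / ((D:ℝ) * s^2 * s)))^2
      = (γj^2/s^2) * ((if j = l then (1:ℝ) else 0) - 1/(D:ℝ))^2
        - (2*γj^2*c j/((D:ℝ)*s^4)) * (((if j = l then (1:ℝ) else 0) - 1/(D:ℝ)) * c l)
        + (γj^2*(c j)^2/((D:ℝ)^2*s^6)) * (c l)^2 := by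
    intro l
    field_simp
    ring
  have e1 : ∑ l, (((if j = l then (1:ℝ) else 0) - 1/(D:ℝ)))^2 = 1 - 1/(D:ℝ) := by
    have h : ∀ l : Fin D, (((if j = l then (1:ℝ) else 0) - 1/(D:ℝ)))^2
        = (if j = l then (1:ℝ) - 2/(D:ℝ) else 0) + 1/(D:ℝ)^2 := by
      intro l; split <;> ring
    rw [Finset.sum_congr rfl fun l _ => h l, Finset.sum_add_distrib,
      Finset.sum_ite_eq, Finset.sum_const, Finset.card_univ, Fintype.card_fin]
    simp only [Finset.mem_univ, if_true, nsmul_eq_mul]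
    field_simp
    ring
  have e2 : ∑ l, (((if j = l then (1:ℝ) else 0) - 1/(D:ℝ)) * c l) = c j := by
    have h : ∀ l : Fin D, (((if j = l then (1:ℝ) else 0) - 1/(D:ℝ)) * c l)
        = (if j = l then c l else 0) - (1/(D:ℝ)) * c l := by intro l; split <;> ring
    rw [Finset.sum_congr rfl fun l _ => h l, Finset.sum_sub_distrib,
      Finset.sum_ite_eq, ← Finset.mul_sum, hsum]
    simp
  calc ∑ l, (γj * (((if j = l then (1:ℝ) else 0) - 1/(D:ℝ)) / s -
        c j * c l / ((D:ℝ) * s^2 * s)))^2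
      = (γj^2/s^2) * (1 - 1/(D:ℝ)) - γj^2*(c j)^2/((D:ℝ)*s^4) := by
        rw [Finset.sum_congr rfl fun l _ => key l, Finset.sum_add_distrib,
          Finset.sum_sub_distrib, ← Finset.mul_sum, ← Finset.mul_sum, ← Finset.mul_sum,
          e1, e2, hsq]
        field_simp
        ring
    _ ≤ γj^2 / s^2 := by
        have h1 : (γj^2/s^2) * (1 - 1/(D:ℝ)) ≤ γj^2/s^2 * 1 := by
          apply mul_le_mul_of_nonneg_left _ (by positivity)
          have : 0 ≤ 1/(D:ℝ) := by positivity
          linarith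
        have h2 : 0 ≤ γj^2*(c j)^2/((D:ℝ)*s^4) := by positivity
        linarith


private lemma aux_row_deriv {D : ℕ} (hD : 0 < D) (w : Fin D → ℝ) (γj : ℝ) (j : Fin D)
    (v : ℝ) (hvdef : v = (∑ t, (w t - (∑ s, w s) / (D:ℝ))^2) / (D:ℝ)) (hv : 0 < v) :
    ∃ L : (Fin D → ℝ) →L[ℝ] ℝ,
      HasFDerivAt (fun u : Fin D → ℝ =>
          (u j - (∑ t, u t) / (D:ℝ)) /
            Real.sqrt ((∑ t, (u t - (∑ s, u s) / (D:ℝ))^2) / (D:ℝ)) * γj) L w ∧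
      ∀ l, L (Pi.single l 1) =
        γj * (((if j = l then (1:ℝ) else 0) - 1/(D:ℝ)) / Real.sqrt v -
          (w j - (∑ s, w s)/(D:ℝ)) * (w l - (∑ s, w s)/(D:ℝ)) /
            ((D:ℝ) * v * Real.sqrt v)) := by
  have hD' : (0:ℝ) < D := by exact_mod_cast hD
  have hD0 : (D:ℝ) ≠ 0 := hD'.ne'
  have hsum : HasFDerivAt (fun u : Fin D → ℝ => ∑ t, u t)
      ((∑ t : Fin D, ContinuousLinearMap.proj t : (Fin D → ℝ) →L[ℝ] ℝ)) w :=
    HasFDerivAt.fun_sum fun t _ => hasFDerivAt_apply t w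
  have hmean : HasFDerivAt (fun u : Fin D → ℝ => (∑ t, u t) / (D:ℝ))
      (((D:ℝ)⁻¹ • ∑ t : Fin D, ContinuousLinearMap.proj t : (Fin D → ℝ) →L[ℝ] ℝ)) w := by
    have h0 := HasFDerivAt.mul_const (𝕜 := ℝ) hsum (D:ℝ)⁻¹
    simpa [div_eq_mul_inv] using h0
  have hcent : ∀ t : Fin D, HasFDerivAt (fun u : Fin D → ℝ => u t - (∑ s, u s) / (D:ℝ))
      ((ContinuousLinearMap.proj t - (D:ℝ)⁻¹ • ∑ s : Fin D, ContinuousLinearMap.proj s : (Fin D → ℝ) →L[ℝ] ℝ)) w :=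
    fun t => (hasFDerivAt_apply t w).sub hmean
  have hsq : ∀ t : Fin D, HasFDerivAt (fun u : Fin D → ℝ => (u t - (∑ s, u s) / (D:ℝ))^2)
      (((w t - (∑ s, w s) / (D:ℝ)) • (ContinuousLinearMap.proj t - (D:ℝ)⁻¹ • ∑ s : Fin D, ContinuousLinearMap.proj s)
        + (w t - (∑ s, w s) / (D:ℝ)) • (ContinuousLinearMap.proj t - (D:ℝ)⁻¹ • ∑ s : Fin D, ContinuousLinearMap.proj s) : (Fin D → ℝ) →L[ℝ] ℝ)) w := by
    intro t
    have h := (hcent t).mul (hcent t)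
    simp only [pow_two]
    exact h
  have hq : HasFDerivAt (fun u : Fin D → ℝ => (∑ t, (u t - (∑ s, u s) / (D:ℝ))^2) / (D:ℝ))
      (((D:ℝ)⁻¹ • ∑ t : Fin D,
        ((w t - (∑ s, w s) / (D:ℝ)) • (ContinuousLinearMap.proj t - (D:ℝ)⁻¹ • ∑ s : Fin D, ContinuousLinearMap.proj s)
          + (w t - (∑ s, w s) / (D:ℝ)) • (ContinuousLinearMap.proj t - (D:ℝ)⁻¹ • ∑ s : Fin D, ContinuousLinearMap.proj s)) : (Fin D → ℝ) →L[ℝ] ℝ)) w := by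
    simpa [div_eq_mul_inv] using (HasFDerivAt.fun_sum fun t (_ : t ∈ Finset.univ) => hsq t).mul_const (D:ℝ)⁻¹
  have hqw : (∑ t, (w t - (∑ s, w s) / (D:ℝ))^2) / (D:ℝ) = v := hvdef.symm
  have hsq0 : Real.sqrt v ≠ 0 := (Real.sqrt_pos.2 hv).ne'
  have hsqrt := hq.sqrt (by rw [hqw]; exact hv.ne')
  have hinv := (hasFDerivAt_inv' (𝕜 := ℝ) (x := Real.sqrt ((∑ t, (w t - (∑ s, w s) / (D:ℝ))^2) / (D:ℝ))) (by rw [hqw]; exact hsq0)).comp w hsqrt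
  have hfull := ((hcent j).mul hinv).mul_const γj
  refine ⟨_, hfull.congr_of_eventuallyEq (Filter.Eventually.of_forall fun u => ?_), fun l => ?_⟩
  · simp [Function.comp_def, div_eq_mul_inv]
  · simp only [ContinuousLinearMap.smul_apply, ContinuousLinearMap.add_apply,
      ContinuousLinearMap.comp_apply, ContinuousLinearMap.coe_sub', Pi.sub_apply,
      ContinuousLinearMap.proj_apply, ContinuousLinearMap.sum_apply,
      ContinuousLinearMap.neg_apply, ContinuousLinearMap.mulLeftRight_apply,
      smul_eq_mul, Pi.single_apply, Function.comp_apply, Finset.sum_ite_eq',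
      Finset.mem_univ, if_true, mul_one, hqw]
    have hzsum : ∑ t, (w t - (∑ s, w s)/(D:ℝ)) = 0 := by
      rw [Finset.sum_sub_distrib, Finset.sum_const, Finset.card_univ, Fintype.card_fin]
      rw [nsmul_eq_mul, mul_div_cancel₀ _ hD0, sub_self]
    have hS : (∑ x : Fin D, ((w x - (∑ s, w s)/(D:ℝ)) * ((if x = l then (1:ℝ) else 0) - (D:ℝ)⁻¹)
        + (w x - (∑ s, w s)/(D:ℝ)) * ((if x = l then (1:ℝ) else 0) - (D:ℝ)⁻¹)))
        = 2 * (w l - (∑ s, w s)/(D:ℝ)) := by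
      have h1 : ∀ x : Fin D, ((w x - (∑ s, w s)/(D:ℝ)) * ((if x = l then (1:ℝ) else 0) - (D:ℝ)⁻¹)
          + (w x - (∑ s, w s)/(D:ℝ)) * ((if x = l then (1:ℝ) else 0) - (D:ℝ)⁻¹))
          = 2*(if x = l then (w x - (∑ s, w s)/(D:ℝ)) else 0) - 2*(D:ℝ)⁻¹ * (w x - (∑ s, w s)/(D:ℝ)) := by
        intro x; split <;> ring
      rw [Finset.sum_congr rfl fun x _ => h1 x, Finset.sum_sub_distrib, ← Finset.mul_sum,
        ← Finset.mul_sum, hzsum, Finset.sum_ite_eq', if_pos (Finset.mem_univ l)]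
      ring
    rw [hS]
    have hs0' : (0:ℝ) < Real.sqrt v := Real.sqrt_pos.2 hv
    have hs2 : Real.sqrt v * Real.sqrt v = v := Real.mul_self_sqrt hv.le
    rw [← hs2]
    generalize hgen : Real.sqrt v = s at hs0' ⊢
    rw [Real.sqrt_mul_self hs0'.le]
    field_simp
    ring

end aux

/-- for `Y = LayerNorm(X W_E; γ)` with `X` one-hot, the
Frobenius norm of the Jacobian `∂Y/∂W_E` is at most
`n√D·‖γ‖_F / minₖ ‖w̃ₖ‖₂`. -/
theorem stmt_19 {n d D : ℕ} (hd : (Finset.univ : Finset (Fin d)).Nonempty)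
    (X : Matrix (Fin n) (Fin d) ℝ) (W : Matrix (Fin d) (Fin D) ℝ)
    (γ : Fin D → ℝ)
    (honehot : ∀ i, ∃ k, X i = Pi.single k 1)
    (hW : ∀ k, 0 < ∑ j, (rowCenter W k j)^2)
    (hvar : ∀ i, 0 < rvar (X * W) i) :
    Real.sqrt (∑ i : Fin n, ∑ j : Fin D, ∑ k : Fin d, ∑ l : Fin D,
        (fderiv ℝ (fun V : Matrix (Fin d) (Fin D) ℝ => layerNorm (X * V) γ) W
          (Matrix.single k l 1) i j)^2)
      ≤ n * Real.sqrt D * Real.sqrt (∑ j, (γ j)^2) /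
        Finset.univ.inf' hd (fun k => Real.sqrt (∑ j, (rowCenter W k j)^2)) := by
  classical
  rcases Nat.eq_zero_or_pos D with hDz | hD
  · subst hDz
    obtain ⟨k, -⟩ := hd
    simpa [rowCenter] using hW k
  have hD' : (0:ℝ) < D := by exact_mod_cast hD
  have hD0 : (D:ℝ) ≠ 0 := hD'.ne'
  -- one-hot indices
  obtain ⟨k₀, hk₀⟩ : ∃ k₀ : Fin n → Fin d, ∀ i, X i = Pi.single (k₀ i) 1 :=
    ⟨fun i => (honehot i).choose, fun i => (honehot i).choose_spec⟩
  have hZ : ∀ (V : Matrix (Fin d) (Fin D) ℝ) (i : Fin n) (jj : Fin D),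
      (X * V) i jj = V (k₀ i) jj := by
    intro V i jj
    rw [Matrix.mul_apply, hk₀ i]
    simp [Pi.single_apply, ite_mul]
  -- positivity of the row variances
  have hvv : ∀ i : Fin n,
      0 < (∑ t, (W (k₀ i) t - (∑ s, W (k₀ i) s) / (D:ℝ))^2) / (D:ℝ) := by
    intro i
    have h := hvar i
    simp only [rvar, rmean, hZ] at h
    exact h
  -- row derivatives
  choose L hL1 hL2 using fun (i : Fin n) (jj : Fin D) =>
    aux_row_deriv hD (W (k₀ i)) (γ jj) jj _ rfl (hvv i)
  -- entrywise derivative of the full map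
  have hentry : ∀ (i : Fin n) (jj : Fin D),
      HasFDerivAt (fun V : Matrix (Fin d) (Fin D) ℝ => layerNorm (X * V) γ i jj)
        ((L i jj).comp
          (ContinuousLinearMap.proj (R := ℝ) (φ := fun _ : Fin d => Fin D → ℝ) (k₀ i))) W := by
    intro i jj
    have hproj : HasFDerivAt (fun V : Matrix (Fin d) (Fin D) ℝ => V (k₀ i))
        (ContinuousLinearMap.proj (R := ℝ) (φ := fun _ : Fin d => Fin D → ℝ) (k₀ i)) W :=
      hasFDerivAt_apply (k₀ i) W
    have h := (hL1 i jj).comp W hproj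
    apply h.congr_of_eventuallyEq
    apply Filter.Eventually.of_forall
    intro V
    simp [layerNorm, rmean, rvar, hZ, Function.comp_def]
  have hfull : HasFDerivAt (fun V : Matrix (Fin d) (Fin D) ℝ => layerNorm (X * V) γ)
      (ContinuousLinearMap.pi fun i : Fin n => ContinuousLinearMap.pi fun jj : Fin D =>
        (L i jj).comp
          (ContinuousLinearMap.proj (R := ℝ) (φ := fun _ : Fin d => Fin D → ℝ) (k₀ i))) W :=
    hasFDerivAt_pi.2 fun i => hasFDerivAt_pi.2 fun jj => hentry i jj
  have hev : ∀ (k : Fin d) (l : Fin D) (i : Fin n) (jj : Fin D),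
      fderiv ℝ (fun V : Matrix (Fin d) (Fin D) ℝ => layerNorm (X * V) γ) W
        (Matrix.single k l 1) i jj
      = L i jj ((Matrix.single k l (1:ℝ)) (k₀ i)) := by
    intro k l i jj
    have hfd := @HasFDerivAt.fderiv _ _ _ _ _ _ _ _ _ _ _ _ _ _
      (by exact inferInstanceAs (ContinuousSMul ℝ (Fin d → Fin D → ℝ))) _
      (by exact inferInstanceAs (ContinuousSMul ℝ (Fin n → Fin D → ℝ)))
      (by exact inferInstanceAs (T2Space (Fin n → Fin D → ℝ))) hfull
    refine (congrArg (fun f : (Fin d → Fin D → ℝ) →L[ℝ] (Fin n → Fin D → ℝ) =>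
      f (Matrix.single k l (1:ℝ)) i jj) hfd).trans ?_
    rfl
  simp only [hev]
  -- notation
  set M := Finset.univ.inf' hd (fun k => Real.sqrt (∑ j, (rowCenter W k j)^2)) with hMdef
  have hMpos : 0 < M := (Finset.lt_inf'_iff hd).2 fun k _ => Real.sqrt_pos.2 (hW k)
  set g := ∑ jj : Fin D, (γ jj)^2 with hgdef
  have hg0 : 0 ≤ g := by positivity
  -- the inner double sum bound
  have hinner : ∀ (i : Fin n) (jj : Fin D),
      ∑ k : Fin d, ∑ l : Fin D, (L i jj ((Matrix.single k l (1:ℝ)) (k₀ i)))^2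
        ≤ (γ jj)^2 * ((D:ℝ) / M^2) := by
    intro i jj
    have hrow : ∑ t, (rowCenter W (k₀ i) t)^2
        = ∑ t, (W (k₀ i) t - (∑ s, W (k₀ i) s) / (D:ℝ))^2 := by
      simp [rowCenter]
    have hMle : M^2 ≤ (D:ℝ) * ((∑ t, (W (k₀ i) t - (∑ s, W (k₀ i) s) / (D:ℝ))^2) / (D:ℝ)) := by
      have h1 : M ≤ Real.sqrt (∑ t, (rowCenter W (k₀ i) t)^2) :=
        Finset.inf'_le _ (Finset.mem_univ (k₀ i))
      have h2 : M^2 ≤ (Real.sqrt (∑ t, (rowCenter W (k₀ i) t)^2))^2 :=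
        pow_le_pow_left₀ hMpos.le h1 2
      rw [Real.sq_sqrt (by positivity), hrow] at h2
      rw [mul_div_cancel₀ _ hD0]
      exact h2
    have hsum0 : ∑ t, (W (k₀ i) t - (∑ s, W (k₀ i) s) / (D:ℝ)) = 0 := by
      rw [Finset.sum_sub_distrib, Finset.sum_const, Finset.card_univ, Fintype.card_fin]
      rw [nsmul_eq_mul, mul_div_cancel₀ _ hD0, sub_self]
    have hsq : ∑ t, (W (k₀ i) t - (∑ s, W (k₀ i) s) / (D:ℝ))^2
        = (D:ℝ) * ((∑ t, (W (k₀ i) t - (∑ s, W (k₀ i) s) / (D:ℝ))^2) / (D:ℝ)) := by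
      rw [mul_div_cancel₀ _ hD0]
    rw [Finset.sum_eq_single (k₀ i)]
    · have hsb1 : ∀ l : Fin D, (Matrix.single (k₀ i) l (1:ℝ)) (k₀ i) = Pi.single l 1 := by
        intro l; funext t; simp [Matrix.single, Pi.single_apply, eq_comm]
      calc ∑ l : Fin D, (L i jj ((Matrix.single (k₀ i) l (1:ℝ)) (k₀ i)))^2
          = ∑ l : Fin D, (γ jj * (((if jj = l then (1:ℝ) else 0) - 1/(D:ℝ)) /
              Real.sqrt ((∑ t, (W (k₀ i) t - (∑ s, W (k₀ i) s) / (D:ℝ))^2) / (D:ℝ)) -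
              (W (k₀ i) jj - (∑ s, W (k₀ i) s)/(D:ℝ)) * (W (k₀ i) l - (∑ s, W (k₀ i) s)/(D:ℝ)) /
              ((D:ℝ) * ((∑ t, (W (k₀ i) t - (∑ s, W (k₀ i) s) / (D:ℝ))^2) / (D:ℝ)) *
                Real.sqrt ((∑ t, (W (k₀ i) t - (∑ s, W (k₀ i) s) / (D:ℝ))^2) / (D:ℝ)))))^2 := by
            refine Finset.sum_congr rfl fun l _ => ?_
            rw [hsb1 l, hL2 i jj l]
        _ ≤ (γ jj)^2 / ((∑ t, (W (k₀ i) t - (∑ s, W (k₀ i) s) / (D:ℝ))^2) / (D:ℝ)) :=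
            aux_sum_sq_bound hD (fun t => W (k₀ i) t - (∑ s, W (k₀ i) s) / (D:ℝ)) jj (γ jj)
              ((∑ t, (W (k₀ i) t - (∑ s, W (k₀ i) s) / (D:ℝ))^2) / (D:ℝ)) (hvv i) hsum0 hsq
        _ ≤ (γ jj)^2 * ((D:ℝ) / M^2) := by
            have hstep : (γ jj)^2 / ((∑ t, (W (k₀ i) t - (∑ s, W (k₀ i) s) / (D:ℝ))^2) / (D:ℝ))
                ≤ (γ jj)^2 / (M^2 / (D:ℝ)) := by
              apply div_le_div_of_nonneg_left (by positivity) (by positivity)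
              rw [div_le_iff₀ hD']
              calc M^2 ≤ (D:ℝ) * ((∑ t, (W (k₀ i) t - (∑ s, W (k₀ i) s) / (D:ℝ))^2) / (D:ℝ)) := hMle
                _ = ((∑ t, (W (k₀ i) t - (∑ s, W (k₀ i) s) / (D:ℝ))^2) / (D:ℝ)) * (D:ℝ) := by ring
            refine hstep.trans_eq ?_
            rw [div_div_eq_mul_div, mul_div_assoc]
    · intro k _ hk
      apply Finset.sum_eq_zero
      intro l _
      have hz : (Matrix.single k l (1:ℝ)) (k₀ i) = 0 := by
        funext t; simp [Matrix.single, hk]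
      rw [hz, map_zero]
      norm_num
    · intro h; exact absurd (Finset.mem_univ _) h
  have htotal : ∑ i : Fin n, ∑ jj : Fin D, ∑ k : Fin d, ∑ l : Fin D,
      (L i jj ((Matrix.single k l (1:ℝ)) (k₀ i)))^2 ≤ (n:ℝ) * (g * ((D:ℝ)/M^2)) := by
    calc ∑ i : Fin n, ∑ jj : Fin D, ∑ k : Fin d, ∑ l : Fin D,
        (L i jj ((Matrix.single k l (1:ℝ)) (k₀ i)))^2
        ≤ ∑ _i : Fin n, ∑ jj : Fin D, (γ jj)^2 * ((D:ℝ)/M^2) :=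
          Finset.sum_le_sum fun i _ => Finset.sum_le_sum fun jj _ => hinner i jj
      _ = (n:ℝ) * (g * ((D:ℝ)/M^2)) := by
          rw [← Finset.sum_mul, Finset.sum_const, Finset.card_univ, Fintype.card_fin,
            nsmul_eq_mul]
  have hRHSnn : 0 ≤ (n:ℝ) * Real.sqrt (D:ℝ) * Real.sqrt g / M := by positivity
  have hfin : ∑ i : Fin n, ∑ jj : Fin D, ∑ k : Fin d, ∑ l : Fin D,
      (L i jj ((Matrix.single k l (1:ℝ)) (k₀ i)))^2
      ≤ ((n:ℝ) * Real.sqrt (D:ℝ) * Real.sqrt g / M)^2 := by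
    have hsqe : ((n:ℝ) * Real.sqrt (D:ℝ) * Real.sqrt g / M)^2
        = (n:ℝ)^2 * ((D:ℝ) * (g / M^2)) := by
      rw [div_pow, mul_pow, mul_pow, Real.sq_sqrt (by positivity : (0:ℝ) ≤ (D:ℝ)),
        Real.sq_sqrt hg0]
      ring
    rw [hsqe]
    have hn : (n:ℝ) ≤ (n:ℝ)^2 := by
      have h' : n ≤ n^2 := Nat.le_self_pow (by norm_num) n
      exact_mod_cast h'
    refine htotal.trans ?_
    have h0 : 0 ≤ g * ((D:ℝ)/M^2) := by positivity
    calc (n:ℝ) * (g * ((D:ℝ)/M^2)) ≤ (n:ℝ)^2 * (g * ((D:ℝ)/M^2)) :=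
          mul_le_mul_of_nonneg_right hn h0
      _ = (n:ℝ)^2 * ((D:ℝ) * (g / M^2)) := by ring
  refine le_trans (Real.sqrt_le_sqrt hfin) ?_
  rw [Real.sqrt_sq hRHSnn]
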